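/- For all t ∈ (0, m] with m > 1: (t-1)² · (m ln m - m + 1) ≤ (m-1)² · (t ln t - t + 1). -/

import Mathlib

open Real Set

private noncomputable def gfun (t : ℝ) : ℝ := t * Real.log t - t + 1

private lemma hasDerivAt_gfun {t : ℝ} (ht : t ≠ 0) :
    HasDerivAt gfun (Real.log t) t := by
  have h1 : HasDerivAt (fun x : ℝ => x * Real.log x) (Real.log t + 1) t :=
    Real.hasDerivAt_mul_log ht
  have h2 : HasDerivAt (fun x : ℝ => x * Real.log x - x + 1)
      (Real.log t + 1 - 1) t := ((h1.sub (hasDerivAt_id t)).add_const 1)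
  exact h2.congr_deriv (by ring)

private lemma hasDerivAt_q {t : ℝ} (ht : t ≠ 0) :
    HasDerivAt (fun t => gfun t - (t - 1) ^ 2 / 2) (Real.log t - (t - 1)) t := by
  have h1 : HasDerivAt (fun x : ℝ => (x - 1) ^ 2 / 2) (t - 1) t := by
    have : HasDerivAt (fun x : ℝ => (x - 1) ^ 2) (2 * (t - 1) ^ 1 * 1) t :=
      (((hasDerivAt_id t).sub_const 1).pow 2)
    have h := this.div_const 2
    exact h.congr_deriv (by ring)
  exact (hasDerivAt_gfun ht).sub h1

/-- q(t) = g(t) - (t-1)^2/2 is antitone on (0,∞). -/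
private lemma q_antitone : AntitoneOn (fun t => gfun t - (t - 1) ^ 2 / 2) (Set.Ioi (0:ℝ)) := by
  apply AntitoneOn.mono (antitoneOn_of_deriv_nonpos (convex_Ioi 0) ?_ ?_ ?_) le_rfl
  · intro t ht
    exact ((hasDerivAt_q (ne_of_gt ht)).continuousAt).continuousWithinAt
  · intro t ht
    rw [interior_Ioi] at ht
    exact (hasDerivAt_q (ne_of_gt ht)).differentiableAt.differentiableWithinAt
  · intro t ht
    rw [interior_Ioi] at ht
    rw [(hasDerivAt_q (ne_of_gt ht)).deriv]
    have := Real.log_le_sub_one_of_pos ht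
    linarith

private lemma gfun_ge {t : ℝ} (ht : 0 < t) (ht1 : t ≤ 1) : (t - 1) ^ 2 / 2 ≤ gfun t := by
  have := q_antitone ht (by norm_num : (1:ℝ) ∈ Set.Ioi (0:ℝ)) ht1
  simp only [gfun, Real.log_one] at this ⊢
  nlinarith

private lemma gfun_le {m : ℝ} (hm : 1 ≤ m) : gfun m ≤ (m - 1) ^ 2 / 2 := by
  have := q_antitone (by norm_num : (1:ℝ) ∈ Set.Ioi (0:ℝ))
    (Set.mem_Ioi.mpr (by linarith)) hm
  simp only [gfun, Real.log_one] at this ⊢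
  nlinarith

private lemma gfun_nonneg {t : ℝ} (ht : 0 < t) : 0 ≤ gfun t := by
  have h := Real.log_le_sub_one_of_pos (show (0:ℝ) < 1/t by positivity)
  rw [Real.log_div one_ne_zero (ne_of_gt ht), Real.log_one] at h
  have : 1 - 1/t ≤ Real.log t := by linarith
  have h2 : t * (1 - 1/t) ≤ t * Real.log t := by
    apply mul_le_mul_of_nonneg_left this ht.le
  have : t * (1 - 1/t) = t - 1 := by field_simp
  simp only [gfun]
  nlinarith

/-- ψ(t) = (t+1) log t - 2(t-1) > 0 for t > 1. -/
private lemma psi_pos {t : ℝ} (ht : 1 < t) : 0 < (t + 1) * Real.log t - 2 * (t - 1) := by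
  set ψ : ℝ → ℝ := fun t => (t + 1) * Real.log t - 2 * (t - 1) with hψ
  have hd : ∀ x : ℝ, 0 < x → HasDerivAt ψ (Real.log x + (x + 1) / x - 2) x := by
    intro x hx
    have h1 : HasDerivAt (fun y : ℝ => (y + 1) * Real.log y)
        (1 * Real.log x + (x + 1) * x⁻¹) x :=
      ((hasDerivAt_id x).add_const 1).mul (Real.hasDerivAt_log (ne_of_gt hx))
    have h2 : HasDerivAt (fun y : ℝ => 2 * (y - 1)) 2 x := by
      simpa using ((hasDerivAt_id x).sub_const 1).const_mul 2
    have := h1.sub h2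
    exact this.congr_deriv (by rw [div_eq_mul_inv, one_mul])
  have hmono : StrictMonoOn ψ (Set.Ici (1:ℝ)) := by
    apply strictMonoOn_of_deriv_pos (convex_Ici 1)
    · intro x hx
      rw [Set.mem_Ici] at hx
      exact ((hd x (lt_of_lt_of_le one_pos hx)).continuousAt).continuousWithinAt
    · intro x hx
      rw [interior_Ici, Set.mem_Ioi] at hx
      rw [(hd x (by linarith : 0 < x)).deriv]
      have hx0 : (0:ℝ) < x := by linarith
      have hlog : 1 - 1/x < Real.log x := by
        have h := Real.log_lt_sub_one_of_pos (show (0:ℝ) < 1/x by positivity)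
          (by intro h; field_simp at h; linarith)
        rw [Real.log_div one_ne_zero (by linarith), Real.log_one] at h
        linarith
      have : (x + 1) / x = 1 + 1/x := by field_simp
      rw [this]
      linarith
  have := hmono (Set.self_mem_Ici) (Set.mem_Ici.mpr ht.le) ht
  simpa [hψ] using this

/-- h(t) = g(t)/(t-1)^2 is strictly antitone on (1,∞). -/
private lemma h_anti : StrictAntiOn (fun t => gfun t / (t - 1) ^ 2) (Set.Ioi (1:ℝ)) := by
  have hd : ∀ t : ℝ, 1 < t → HasDerivAt (fun t => gfun t / (t - 1) ^ 2)
      ((Real.log t * (t - 1) ^ 2 - gfun t * (2 * (t - 1))) / ((t - 1) ^ 2) ^ 2) t := by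
    intro t ht
    have hden : HasDerivAt (fun x : ℝ => (x - 1) ^ 2) (2 * (t - 1)) t := by
      have : HasDerivAt (fun x : ℝ => (x - 1) ^ 2) (2 * (t - 1) ^ 1 * 1) t :=
        (((hasDerivAt_id t).sub_const 1).pow 2)
      simpa using this
    exact (hasDerivAt_gfun (by linarith)).div hden (by nlinarith)
  apply strictAntiOn_of_deriv_neg (convex_Ioi 1)
  · intro t ht
    exact ((hd t ht).continuousAt).continuousWithinAt
  · intro t ht
    rw [interior_Ioi, Set.mem_Ioi] at ht
    rw [(hd t ht).deriv]
    apply div_neg_of_neg_of_pos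
    · have hpsi := psi_pos ht
      have : Real.log t * (t - 1) ^ 2 - gfun t * (2 * (t - 1))
          = -((t - 1) * ((t + 1) * Real.log t - 2 * (t - 1))) := by
        simp only [gfun]; ring
      rw [this]
      have h1 : 0 < t - 1 := by linarith
      nlinarith
    · have h1 : 0 < t - 1 := by linarith
      positivity

/-- For all `t ∈ (0, m]` with `m > 1`,
`(t-1)² (m ln m - m + 1) ≤ (m-1)² (t ln t - t + 1)`. -/
theorem stmt12 (m t : ℝ) (hm : 1 < m) (ht : 0 < t) (htm : t ≤ m) :
    (t - 1) ^ 2 * (m * Real.log m - m + 1)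
      ≤ (m - 1) ^ 2 * (t * Real.log t - t + 1) := by
  have hgm : m * Real.log m - m + 1 = gfun m := rfl
  have hgt : t * Real.log t - t + 1 = gfun t := rfl
  rw [hgm, hgt]
  rcases le_or_gt t 1 with ht1 | ht1
  · -- 0 < t ≤ 1 : g(t) ≥ (t-1)²/2 and g(m) ≤ (m-1)²/2
    have h1 := gfun_ge ht ht1
    have h2 := gfun_le hm.le
    have hsq : (t - 1) ^ 2 * gfun m ≤ (t - 1) ^ 2 * ((m - 1) ^ 2 / 2) :=
      mul_le_mul_of_nonneg_left h2 (sq_nonneg _)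
    have hsq2 : (m - 1) ^ 2 * ((t - 1) ^ 2 / 2) ≤ (m - 1) ^ 2 * gfun t :=
      mul_le_mul_of_nonneg_left h1 (sq_nonneg _)
    nlinarith [sq_nonneg (m-1), sq_nonneg (t-1)]
  · -- 1 < t ≤ m
    rcases eq_or_lt_of_le htm with rfl | htm'
    · linarith
    · have hanti := h_anti (Set.mem_Ioi.mpr ht1) (Set.mem_Ioi.mpr (lt_trans ht1 htm')) htm'
      have hdt : (0:ℝ) < (t - 1) ^ 2 := by nlinarith
      have hdm : (0:ℝ) < (m - 1) ^ 2 := by nlinarith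
      rw [div_lt_div_iff₀ hdm hdt] at hanti
      linarith
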